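/- Let P = P_1 ⊗ ⋯ ⊗ P_M be a product probability measure on ℝ^M whose coordinate marginals have finite second moments, and let f : ℝ^M → ℝ be a quadratic function f(x) = c + bᵀx + xᵀA x with A a symmetric M×M real matrix, b ∈ ℝ^M, c ∈ ℝ. For x^t ∈ ℝ^M define the coalition values v(T) = ∫ f(x_T^t, z) d(⊗_{j∉T} P_j)(z), the Shapley values SV_i(x^t) = (1/M) Σ_{k=0}^{M−1} C(M−1,k)^{−1} Σ_{S ⊆ {1,…,M}\{i}, |S|=k} ( v(S∪{i}) − v(S) ), and the expected integrated gradient EIG_i(x^t) = ∫ (x_i^t − z_i) [∫₀¹ (∂f/∂x_i)(z + α(x^t − z)) dα] dP(z). Then SV_i(x^t) = EIG_i(x^t) for every i = 1, …, M and every x^t ∈ ℝ^M; that is, the Shapley value is equivalent to the expected integrated gradient up to second order of the power expansion of f. -/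

import Mathlib

open MeasureTheory Finset

variable {M : ℕ}



lemma pi_integrable_prod (μ : Fin M → Measure ℝ) [inst : ∀ i, SigmaFinite (μ i)]
    (g : Fin M → ℝ → ℝ) (hg : ∀ i, Integrable (g i) (μ i)) :
    Integrable (fun z : Fin M → ℝ => ∏ i, g i (z i)) (Measure.pi μ) :=
  @MeasureTheory.Integrable.fin_nat_prod ℝ _ M (fun _ => ℝ) (fun _ => inferInstance) μ (fun i => inst i) g hg

lemma pi_integral_prod (μ : Fin M → Measure ℝ) [inst : ∀ i, SigmaFinite (μ i)]
    (g : Fin M → ℝ → ℝ) :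
    ∫ z : Fin M → ℝ, ∏ i, g i (z i) ∂(Measure.pi μ) = ∏ i, ∫ t, g i t ∂(μ i) :=
  @MeasureTheory.integral_fin_nat_prod_eq_prod ℝ _ M (fun _ => ℝ) (fun _ => inferInstance) μ (fun i => inst i) g

section one
variable (μ : Fin M → Measure ℝ) [∀ i, IsProbabilityMeasure (μ i)] (i : Fin M) (G : ℝ → ℝ)

lemma pi_integrable_one (hG : Integrable G (μ i)) :
    Integrable (fun z : Fin M → ℝ => G (z i)) (Measure.pi μ) := by
  have h := pi_integrable_prod μ (fun k t => if k = i then G t else 1) (fun k => by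
    by_cases h : k = i
    · simpa [h] using hG
    · simp only [h, if_false]; exact integrable_const 1)
  refine h.congr (Filter.Eventually.of_forall fun z => ?_)
  simp [Finset.prod_ite_eq']

lemma pi_integral_one : ∫ z : Fin M → ℝ, G (z i) ∂(Measure.pi μ) = ∫ t, G t ∂(μ i) := by
  have h := pi_integral_prod μ (fun k t => if k = i then G t else 1)
  have e1 : ∀ z : Fin M → ℝ, (∏ k, (fun t => if k = i then G t else 1) (z k)) = G (z i) := by
    intro z; simp [Finset.prod_ite_eq']
  simp only [e1] at h
  rw [h, Finset.prod_eq_single i]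
  · simp
  · intro k _ hk
    simp [hk]
  · simp
end one

section two
variable (μ : Fin M → Measure ℝ) [∀ i, IsProbabilityMeasure (μ i)] (i j : Fin M) (hij : i ≠ j)
  (G H : ℝ → ℝ)

include hij in
lemma two_prod_eval (z : Fin M → ℝ) :
    (∏ k, (fun t => if k = i then G t else if k = j then H t else 1) (z k)) = G (z i) * H (z j) := by
  rw [← Finset.prod_subset (Finset.subset_univ {i, j})]
  · rw [Finset.prod_pair hij]
    simp [hij, hij.symm]
  · intro k _ hk
    simp only [Finset.mem_insert, Finset.mem_singleton, not_or] at hk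
    simp [hk.1, hk.2]

include hij in
lemma pi_integrable_two (hG : Integrable G (μ i)) (hH : Integrable H (μ j)) :
    Integrable (fun z : Fin M → ℝ => G (z i) * H (z j)) (Measure.pi μ) := by
  have h := pi_integrable_prod μ (fun k t => if k = i then G t else if k = j then H t else 1)
    (fun k => by
      by_cases h1 : k = i
      · simpa [h1] using hG
      · by_cases h2 : k = j
        · subst h2; simpa [h1] using hH
        · simp only [h1, h2, if_false]; exact integrable_const 1)
  exact h.congr (Filter.Eventually.of_forall fun z => two_prod_eval i j hij G H z)

include hij in
lemma pi_integral_two : ∫ z : Fin M → ℝ, G (z i) * H (z j) ∂(Measure.pi μ)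
    = (∫ t, G t ∂(μ i)) * ∫ t, H t ∂(μ j) := by
  have h := pi_integral_prod μ (fun k t => if k = i then G t else if k = j then H t else 1)
  simp only [two_prod_eval i j hij G H] at h
  rw [h, ← Finset.prod_subset (Finset.subset_univ {i, j})]
  · rw [Finset.prod_pair hij]
    simp [hij, hij.symm]
  · intro k _ hk
    simp only [Finset.mem_insert, Finset.mem_singleton, not_or] at hk
    simp [hk.1, hk.2]
end two

lemma integrable_id_of_sq (ν : Measure ℝ) [IsProbabilityMeasure ν]
    (h : Integrable (fun t : ℝ => t ^ 2) ν) : Integrable (fun t : ℝ => t) ν := by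
  refine (h.add (integrable_const 1)).mono' measurable_id.aestronglyMeasurable ?_
  refine Filter.Eventually.of_forall fun t => ?_
  have : |t| ≤ t ^ 2 + 1 := by nlinarith [sq_nonneg (|t| - 1), sq_abs t]
  simpa using this

noncomputable def Wf (μ : Fin M → Measure ℝ) (xt : Fin M → ℝ) (T : Finset (Fin M)) (i : Fin M) : ℝ :=
  if i ∈ T then xt i else ∫ t, t ∂(μ i)

noncomputable def Pf (μ : Fin M → Measure ℝ) (xt : Fin M → ℝ) (T : Finset (Fin M)) (i j : Fin M) : ℝ :=
  if i = j then (if i ∈ T then xt i ^ 2 else ∫ t, t ^ 2 ∂(μ i)) else Wf μ xt T i * Wf μ xt T j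

lemma v_formula (μ : Fin M → Measure ℝ) [∀ i, IsProbabilityMeasure (μ i)]
    (hmom : ∀ i, Integrable (fun z : ℝ => z ^ 2) (μ i))
    (A : Matrix (Fin M) (Fin M) ℝ) (b : Fin M → ℝ) (c : ℝ) (xt : Fin M → ℝ) (T : Finset (Fin M)) :
    ∫ z : Fin M → ℝ, (c + (∑ i, b i * (if i ∈ T then xt i else z i))
      + ∑ i, ∑ j, A i j * (if i ∈ T then xt i else z i) * (if j ∈ T then xt j else z j))
      ∂(Measure.pi μ)
    = c + (∑ i, b i * Wf μ xt T i) + ∑ i, ∑ j, A i j * Pf μ xt T i j := by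
  set G : Fin M → ℝ → ℝ := fun i t => if i ∈ T then xt i else t with hGdef
  have hGint : ∀ i, Integrable (G i) (μ i) := by
    intro i
    by_cases h : i ∈ T
    · simpa [hGdef, h] using integrable_const (xt i)
    · simpa [hGdef, h] using integrable_id_of_sq (μ i) (hmom i)
  have hGsq : ∀ i, Integrable (fun t => G i t * G i t) (μ i) := by
    intro i
    by_cases h : i ∈ T
    · simpa [hGdef, h] using integrable_const (xt i * xt i)
    · simpa [hGdef, h, sq] using hmom i
  have hWG : ∀ i, ∫ t, G i t ∂(μ i) = Wf μ xt T i := by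
    intro i
    by_cases h : i ∈ T <;> simp [hGdef, Wf, h]
  have hI1 : ∀ i : Fin M, Integrable (fun z : Fin M → ℝ => b i * G i (z i)) (Measure.pi μ) :=
    fun i => (pi_integrable_one μ i (G i) (hGint i)).const_mul (b i)
  have hI2 : ∀ i j : Fin M,
      Integrable (fun z : Fin M → ℝ => A i j * (G i (z i) * G j (z j))) (Measure.pi μ) := by
    intro i j
    by_cases h : i = j
    · subst h
      exact (pi_integrable_one μ i (fun t => G i t * G i t) (hGsq i)).const_mul (A i i)
    · exact (pi_integrable_two μ i j h (G i) (G j) (hGint i) (hGint j)).const_mul (A i j)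
  have hval2 : ∀ i j : Fin M,
      ∫ z : Fin M → ℝ, A i j * (G i (z i) * G j (z j)) ∂(Measure.pi μ) = A i j * Pf μ xt T i j := by
    intro i j
    rw [MeasureTheory.integral_const_mul]
    congr 1
    by_cases h : i = j
    · subst h
      rw [pi_integral_one μ i (fun t => G i t * G i t)]
      by_cases h2 : i ∈ T <;> simp [Pf, hGdef, h2, sq]
    · rw [pi_integral_two μ i j h (G i) (G j), hWG, hWG]
      simp [Pf, h]
  have key : ∀ z : Fin M → ℝ,
      (c + (∑ i, b i * (if i ∈ T then xt i else z i))
        + ∑ i, ∑ j, A i j * (if i ∈ T then xt i else z i) * (if j ∈ T then xt j else z j))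
      = c + (∑ i, b i * G i (z i)) + ∑ i, ∑ j, A i j * (G i (z i) * G j (z j)) := by
    intro z
    simp [hGdef, mul_assoc]
  simp only [key]
  have h1 : Integrable (fun z : Fin M → ℝ => ∑ i, b i * G i (z i)) (Measure.pi μ) :=
    integrable_finset_sum _ (fun i _ => hI1 i)
  have h2 : Integrable
      (fun z : Fin M → ℝ => ∑ i, ∑ j, A i j * (G i (z i) * G j (z j))) (Measure.pi μ) :=
    integrable_finset_sum _ (fun i _ => integrable_finset_sum _ (fun j _ => hI2 i j))
  have e1 : ∫ z : Fin M → ℝ, (c + (∑ i, b i * G i (z i))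
      + ∑ i, ∑ j, A i j * (G i (z i) * G j (z j))) ∂(Measure.pi μ)
      = (∫ z : Fin M → ℝ, (c + ∑ i, b i * G i (z i)) ∂(Measure.pi μ))
        + ∫ z : Fin M → ℝ, ∑ i, ∑ j, A i j * (G i (z i) * G j (z j)) ∂(Measure.pi μ) :=
    integral_add ((integrable_const c).add h1) h2
  have e2 : ∫ z : Fin M → ℝ, (c + ∑ i, b i * G i (z i)) ∂(Measure.pi μ)
      = (∫ _z : Fin M → ℝ, c ∂(Measure.pi μ)) + ∫ z : Fin M → ℝ, ∑ i, b i * G i (z i) ∂(Measure.pi μ) :=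
    integral_add (integrable_const c) h1
  rw [e1, e2, integral_const, integral_finset_sum _ (fun i _ => hI1 i),
    integral_finset_sum _ (fun i _ => integrable_finset_sum _ (fun j _ => hI2 i j))]
  have : IsProbabilityMeasure (Measure.pi μ) := by infer_instance
  simp only [measure_univ, ENNReal.toReal_one, probReal_univ, smul_eq_mul, one_mul, one_smul]
  congr 1
  · congr 1
    refine Finset.sum_congr rfl fun i _ => ?_
    rw [MeasureTheory.integral_const_mul, pi_integral_one μ i (G i), hWG]
  · refine Finset.sum_congr rfl fun i _ => ?_
    rw [integral_finset_sum _ (fun j _ => hI2 i j)]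
    exact Finset.sum_congr rfl fun j _ => hval2 i j

noncomputable def vFval (μ : Fin M → Measure ℝ) (A : Matrix (Fin M) (Fin M) ℝ)
    (b : Fin M → ℝ) (c : ℝ) (xt : Fin M → ℝ) (T : Finset (Fin M)) : ℝ :=
  c + (∑ i, b i * Wf μ xt T i) + ∑ i, ∑ j, A i j * Pf μ xt T i j

lemma vF_diff (μ : Fin M → Measure ℝ) (A : Matrix (Fin M) (Fin M) ℝ) (hA : A.IsSymm)
    (b : Fin M → ℝ) (c : ℝ) (xt : Fin M → ℝ) (i : Fin M) (S : Finset (Fin M)) (hiS : i ∉ S) :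
    vFval μ A b c xt (insert i S) - vFval μ A b c xt S
      = b i * (xt i - ∫ t, t ∂(μ i)) + A i i * (xt i ^ 2 - ∫ t, t ^ 2 ∂(μ i))
        + 2 * (xt i - ∫ t, t ∂(μ i)) * ∑ j ∈ Finset.univ.erase i, A i j * Wf μ xt S j := by
  set mi := ∫ t, t ∂(μ i) with hmi
  set E := Finset.univ.erase i with hE
  have e1 : ∀ (g : Fin M → ℝ), ∑ j, g j = g i + ∑ j ∈ E, g j := fun g =>
    (Finset.add_sum_erase _ g (Finset.mem_univ i)).symm
  have hsplit : ∀ T, vFval μ A b c xt T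
      = c + (b i * Wf μ xt T i + ∑ j ∈ E, b j * Wf μ xt T j)
        + ((A i i * Pf μ xt T i i + ∑ j ∈ E, A i j * Pf μ xt T i j)
          + ∑ k ∈ E, (A k i * Pf μ xt T k i + ∑ j ∈ E, A k j * Pf μ xt T k j)) := by
    intro T
    rw [vFval, e1 (fun j => b j * Wf μ xt T j), e1 (fun k => ∑ j, A k j * Pf μ xt T k j),
      e1 (fun j => A i j * Pf μ xt T i j)]
    congr 2
    exact Finset.sum_congr rfl fun k _ => e1 (fun j => A k j * Pf μ xt T k j)
  have hji : ∀ j ∈ E, j ≠ i := fun j hj => (Finset.mem_erase.1 hj).1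
  have hWj : ∀ j ∈ E, Wf μ xt (insert i S) j = Wf μ xt S j := by
    intro j hj
    simp [Wf, Finset.mem_insert, hji j hj]
  have hWi_T : Wf μ xt (insert i S) i = xt i := by simp [Wf]
  have hWi_S : Wf μ xt S i = mi := by simp [Wf, hiS, hmi]
  have hPii_T : Pf μ xt (insert i S) i i = xt i ^ 2 := by simp [Pf]
  have hPii_S : Pf μ xt S i i = ∫ t, t ^ 2 ∂(μ i) := by simp [Pf, hiS]
  set X := ∑ j ∈ E, A i j * Wf μ xt S j with hX
  set B := ∑ j ∈ E, b j * Wf μ xt S j with hB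
  set Q := ∑ k ∈ E, ∑ j ∈ E, A k j * Pf μ xt S k j with hQ
  have s1 : ∑ j ∈ E, b j * Wf μ xt (insert i S) j = B :=
    Finset.sum_congr rfl fun j hj => by rw [hWj j hj]
  have s2 : ∑ j ∈ E, A i j * Pf μ xt (insert i S) i j = xt i * X := by
    rw [hX, Finset.mul_sum]
    refine Finset.sum_congr rfl fun j hj => ?_
    rw [Pf, if_neg (hji j hj).symm, hWi_T, hWj j hj]
    ring
  have s3 : ∑ j ∈ E, A i j * Pf μ xt S i j = mi * X := by
    rw [hX, Finset.mul_sum]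
    refine Finset.sum_congr rfl fun j hj => ?_
    rw [Pf, if_neg (hji j hj).symm, hWi_S]
    ring
  have hPkj : ∀ k ∈ E, ∀ j ∈ E, Pf μ xt (insert i S) k j = Pf μ xt S k j := by
    intro k hk j hj
    by_cases h : k = j
    · subst h
      rw [Pf, Pf, if_pos rfl, if_pos rfl]
      simp [Finset.mem_insert, hji k hk]
    · rw [Pf, Pf, if_neg h, if_neg h, hWj k hk, hWj j hj]
  have s4 : ∑ k ∈ E, (A k i * Pf μ xt (insert i S) k i
        + ∑ j ∈ E, A k j * Pf μ xt (insert i S) k j)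
      = xt i * X + Q := by
    rw [Finset.sum_add_distrib]
    congr 1
    · rw [hX, Finset.mul_sum]
      refine Finset.sum_congr rfl fun k hk => ?_
      rw [Pf, if_neg (hji k hk), hWi_T, hWj k hk, hA.apply i k]
      ring
    · exact Finset.sum_congr rfl fun k hk => Finset.sum_congr rfl fun j hj => by
        rw [hPkj k hk j hj]
  have s5 : ∑ k ∈ E, (A k i * Pf μ xt S k i + ∑ j ∈ E, A k j * Pf μ xt S k j)
      = mi * X + Q := by
    rw [Finset.sum_add_distrib]
    congr 1
    rw [hX, Finset.mul_sum]
    refine Finset.sum_congr rfl fun k hk => ?_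
    rw [Pf, if_neg (hji k hk), hWi_S, hA.apply i k]
    ring
  rw [hsplit (insert i S), hsplit S, hWi_T, hWi_S, hPii_T, hPii_S, s1, s2, s3, s4, s5]
  ring


lemma gauss_real (n : ℕ) : ∑ k ∈ Finset.range n, ((k : ℝ) + 1) = n * (n + 1) / 2 := by
  induction n with
  | zero => simp
  | succ n ih => rw [Finset.sum_range_succ, ih]; push_cast; ring

lemma count_mem {α : Type*} [DecidableEq α] (t : Finset α) (j : α) (hj : j ∈ t) (k : ℕ) :
    ((t.powerset.filter (fun S => S.card = k + 1)).filter (fun S => j ∈ S)).card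
      = (t.card - 1).choose k := by
  have h : ((t.powerset.filter (fun S => S.card = k + 1)).filter (fun S => j ∈ S)).card
      = (Finset.powersetCard k (t.erase j)).card := by
    apply Finset.card_bij (fun S _ => S.erase j)
    · intro S hS
      simp only [Finset.mem_filter, Finset.mem_powerset] at hS
      rw [Finset.mem_powersetCard]
      exact ⟨Finset.erase_subset_erase j hS.1.1,
        by rw [Finset.card_erase_of_mem hS.2, hS.1.2]; omega⟩
    · intro S1 h1 S2 h2 he
      simp only [Finset.mem_filter] at h1 h2
      rw [← Finset.insert_erase h1.2, he, Finset.insert_erase h2.2]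
    · intro U hU
      rw [Finset.mem_powersetCard] at hU
      have hjU : j ∉ U := fun h => Finset.notMem_erase j t (hU.1 h)
      refine ⟨insert j U, ?_, ?_⟩
      · simp only [Finset.mem_filter, Finset.mem_powerset]
        refine ⟨⟨Finset.insert_subset hj (hU.1.trans (Finset.erase_subset j t)), ?_⟩,
          Finset.mem_insert_self j U⟩
        rw [Finset.card_insert_of_notMem hjU, hU.2]
      · rw [Finset.erase_insert hjU]
  rw [h, Finset.card_powersetCard, Finset.card_erase_of_mem hj]

lemma shapley_sum {α : Type*} [DecidableEq α] (t : Finset α) (K1 : ℝ) (cc : α → ℝ) :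
    ∑ k ∈ Finset.range (t.card + 1), ((t.card).choose k : ℝ)⁻¹ *
      ∑ S ∈ t.powerset.filter (fun S => S.card = k), (K1 + ∑ j ∈ S, cc j)
    = (t.card + 1) * K1 + ((t.card + 1) / 2) * ∑ j ∈ t, cc j := by
  set n := t.card with hn
  have hcard : ∀ k, (t.powerset.filter (fun S => S.card = k)).card = n.choose k := by
    intro k; rw [← Finset.powersetCard_eq_filter, Finset.card_powersetCard]
  -- inner sum
  have hinner : ∀ k, (∑ S ∈ t.powerset.filter (fun S => S.card = k), (K1 + ∑ j ∈ S, cc j))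
      = (n.choose k : ℝ) * K1 + ∑ j ∈ t, cc j *
          (((t.powerset.filter (fun S => S.card = k)).filter (fun S => j ∈ S)).card : ℝ) := by
    intro k
    rw [Finset.sum_add_distrib, Finset.sum_const, hcard]
    congr 1
    · simp [mul_comm]
    · have h1 : ∀ S ∈ t.powerset.filter (fun S => S.card = k),
          (∑ j ∈ S, cc j) = ∑ j ∈ t, if j ∈ S then cc j else 0 := by
        intro S hS
        simp only [Finset.mem_filter, Finset.mem_powerset] at hS
        rw [Finset.sum_ite_mem, Finset.inter_eq_right.2 hS.1]
      rw [Finset.sum_congr rfl h1, Finset.sum_comm]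
      refine Finset.sum_congr rfl fun j _ => ?_
      rw [← Finset.sum_filter, Finset.sum_const, nsmul_eq_mul]
      ring
  simp only [hinner, mul_add]
  rw [Finset.sum_add_distrib]
  congr 1
  · have : ∀ k ∈ Finset.range (n + 1), (n.choose k : ℝ)⁻¹ * ((n.choose k : ℝ) * K1) = K1 := by
      intro k hk
      rw [Finset.mem_range] at hk
      have : n.choose k ≠ 0 := (Nat.choose_pos (Nat.lt_succ_iff.1 hk)).ne'
      field_simp
    rw [Finset.sum_congr rfl this, Finset.sum_const, Finset.card_range, nsmul_eq_mul]
    push_cast; ring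
  · -- second part
    rcases Finset.eq_empty_or_nonempty t with he | hne
    · subst he
      simp
    · have hn1 : 1 ≤ n := Finset.card_pos.2 hne
      have hswap : ∀ k, (∑ j ∈ t, cc j *
            (((t.powerset.filter (fun S => S.card = k)).filter (fun S => j ∈ S)).card : ℝ))
          = (∑ j ∈ t, cc j) *
            (if k = 0 then 0 else ((n - 1).choose (k-1) : ℝ)) := by
        intro k
        cases k with
        | zero =>
          simp only [if_pos rfl, mul_zero]
          have : ∀ j ∈ t, cc j *
              (((t.powerset.filter (fun S => S.card = 0)).filter (fun S => j ∈ S)).card : ℝ) = 0 := by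
            intro j hj
            have : ((t.powerset.filter (fun S => S.card = 0)).filter (fun S => j ∈ S)) = ∅ := by
              ext S
              simp only [Finset.mem_filter, Finset.mem_powerset, Finset.notMem_empty,
                iff_false, not_and]
              intro h1 h2
              simpa [Finset.card_eq_zero.1 h1.2] using h2
            rw [this]
            simp
          rw [Finset.sum_congr rfl this, Finset.sum_const_zero]
          simp
        | succ m =>
          simp only [Nat.succ_ne_zero, if_false, Nat.add_sub_cancel]
          rw [Finset.sum_mul]
          refine Finset.sum_congr rfl fun j hj => ?_
          rw [count_mem t j hj m]
      simp only [hswap]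
      have hkey : ∑ k ∈ Finset.range (n + 1), (n.choose k : ℝ)⁻¹ *
          ((∑ j ∈ t, cc j) * (if k = 0 then 0 else ((n - 1).choose (k-1) : ℝ)))
          = (∑ j ∈ t, cc j) * ∑ k ∈ Finset.range (n + 1),
            (n.choose k : ℝ)⁻¹ * (if k = 0 then 0 else ((n - 1).choose (k-1) : ℝ)) := by
        rw [Finset.mul_sum]
        refine Finset.sum_congr rfl fun k _ => ?_
        ring
      rw [hkey]
      have hsum2 : ∑ k ∈ Finset.range (n + 1),
          (n.choose k : ℝ)⁻¹ * (if k = 0 then 0 else ((n - 1).choose (k-1) : ℝ))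
          = (n + 1) / 2 := by
        rw [Finset.sum_range_succ']
        simp only [if_pos rfl, eq_self_iff_true, if_true, mul_zero, add_zero]
        have hterm : ∀ k ∈ Finset.range n,
            (n.choose (k+1) : ℝ)⁻¹ * (if k + 1 = 0 then (0:ℝ) else ((n - 1).choose (k+1-1) : ℝ))
              = ((k : ℝ) + 1) / n := by
          intro k hk
          rw [Finset.mem_range] at hk
          rw [if_neg (by omega : ¬ (k + 1 = 0)), Nat.add_sub_cancel]
          have hne : (n.choose (k+1) : ℝ) ≠ 0 := by
            exact_mod_cast (Nat.choose_pos hk).ne'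
          have hid : (n : ℕ) * (n-1).choose k = n.choose (k+1) * (k+1) := by
            have h2 := Nat.add_one_mul_choose_eq (n-1) k
            have h3 : n - 1 + 1 = n := by omega
            simpa [Nat.succ_eq_add_one, h3] using h2
          have hidR : (n : ℝ) * ((n-1).choose k : ℝ) = (n.choose (k+1) : ℝ) * ((k:ℝ)+1) := by
            exact_mod_cast congrArg (Nat.cast : ℕ → ℝ) hid
          have hnne : (n : ℝ) ≠ 0 := Nat.cast_ne_zero.2 (by omega)
          field_simp at hidR ⊢
          linarith [hidR]
        rw [Finset.sum_congr rfl hterm, ← Finset.sum_div, gauss_real n]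
        have hnne : (n : ℝ) ≠ 0 := Nat.cast_ne_zero.2 (by omega)
        field_simp
      rw [hsum2]
      ring




lemma quad_fderiv_eval (A : Matrix (Fin M) (Fin M) ℝ) (b : Fin M → ℝ) (c : ℝ)
    (f : (Fin M → ℝ) → ℝ)
    (hf : ∀ x : Fin M → ℝ,
      f x = c + ∑ i : Fin M, b i * x i + ∑ i : Fin M, ∑ j : Fin M, A i j * x i * x j)
    (i : Fin M) (x : Fin M → ℝ) :
    fderiv ℝ f x (Pi.single i 1) = b i + ((∑ j, A i j * x j) + ∑ k, A k i * x k) := by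
  have hfe : f = fun x => c + ∑ i : Fin M, b i * x i
      + ∑ i : Fin M, ∑ j : Fin M, A i j * x i * x j := funext hf
  have hproj : ∀ (j : Fin M), HasFDerivAt (fun y : Fin M → ℝ => y j)
      (ContinuousLinearMap.proj (R := ℝ) (φ := fun _ : Fin M => ℝ) j) x := fun j => by
    exact (ContinuousLinearMap.proj (R := ℝ) (φ := fun _ : Fin M => ℝ) j).hasFDerivAt
  have h1 := HasFDerivAt.fun_sum (u := Finset.univ) fun j (_ : j ∈ Finset.univ) =>
    (hproj j).const_mul (b j)
  have h2 := HasFDerivAt.fun_sum (u := Finset.univ) fun k (_ : k ∈ Finset.univ) =>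
    HasFDerivAt.fun_sum (u := Finset.univ) fun j (_ : j ∈ Finset.univ) =>
      ((hproj k).const_mul (A k j)).fun_mul (hproj j)
  have h := ((hasFDerivAt_const c x).fun_add h1).fun_add h2
  rw [hfe, h.fderiv]
  simp only [ContinuousLinearMap.add_apply, ContinuousLinearMap.zero_apply,
    ContinuousLinearMap.coe_sum', Finset.sum_apply, ContinuousLinearMap.smul_apply,
    ContinuousLinearMap.proj_apply, smul_eq_mul, Pi.single_apply, mul_ite, mul_one, mul_zero,
    ite_mul, zero_mul, one_mul, zero_add, Finset.sum_ite_eq', Finset.mem_univ, if_pos,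
    Finset.sum_add_distrib]
  have e : ∀ k : Fin M, (∑ j : Fin M, if k = i then x j * A k j else 0)
      = if k = i then ∑ j : Fin M, A i j * x j else 0 := by
    intro k
    by_cases hk : k = i
    · subst hk; simp [mul_comm]
    · simp [hk]
  simp only [e, Finset.sum_ite_eq', Finset.mem_univ, if_pos]
  ring

lemma inner_integral (A : Matrix (Fin M) (Fin M) ℝ) (hA : A.IsSymm) (b : Fin M → ℝ) (c : ℝ)
    (f : (Fin M → ℝ) → ℝ)
    (hf : ∀ x : Fin M → ℝ,
      f x = c + ∑ i : Fin M, b i * x i + ∑ i : Fin M, ∑ j : Fin M, A i j * x i * x j)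
    (xt : Fin M → ℝ) (i : Fin M) (z : Fin M → ℝ) :
    (∫ α in (0:ℝ)..1, fderiv ℝ f (z + α • (xt - z)) (Pi.single i 1))
      = b i + ∑ j, A i j * (xt j + z j) := by
  set S1 := ∑ j, A i j * z j with hS1
  set S3 := ∑ j, A i j * (xt j - z j) with hS3
  have hfun : (fun α : ℝ => fderiv ℝ f (z + α • (xt - z)) (Pi.single i 1))
      = fun α : ℝ => (b i + 2*S1) + α * (2*S3) := by
    funext α
    rw [quad_fderiv_eval A b c f hf i]
    have hcoord : ∀ j, (z + α • (xt - z)) j = z j + α * (xt j - z j) := by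
      intro j; simp
    simp only [hcoord]
    have hsum1 : ∑ j, A i j * (z j + α * (xt j - z j)) = S1 + α * S3 := by
      rw [hS1, hS3, Finset.mul_sum, ← Finset.sum_add_distrib]
      exact Finset.sum_congr rfl fun j _ => by ring
    have hsum2 : ∑ k, A k i * (z k + α * (xt k - z k)) = S1 + α * S3 := by
      rw [hS1, hS3, Finset.mul_sum, ← Finset.sum_add_distrib]
      exact Finset.sum_congr rfl fun k _ => by rw [hA.apply i k]; ring
    rw [hsum1, hsum2]
    ring
  rw [hfun, intervalIntegral.integral_add intervalIntegrable_const
    (((continuous_mul_right (2*S3)).intervalIntegrable 0 1)),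
    intervalIntegral.integral_const, intervalIntegral.integral_mul_const, integral_id]
  have hcomb : ∑ j, A i j * (xt j + z j) = S1 + (S1 + S3) := by
    rw [hS1, hS3, ← Finset.sum_add_distrib, ← Finset.sum_add_distrib]
    exact Finset.sum_congr rfl fun j _ => by ring
  rw [hcomb]
  simp
  ring


/-- For a quadratic function `f(x) = c + bᵀx + xᵀAx` (with `A` symmetric) and a
product probability measure `P = ⊗ᵢ μᵢ` with finite second moments, the
conditional-expectation Shapley value equals the expected integrated gradient:
`SVᵢ(xᵗ) = EIGᵢ(xᵗ)` for every variable `i` and every test point `xᵗ`. -/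
theorem stmt_7 (M : ℕ) (μ : Fin M → Measure ℝ) [∀ i, IsProbabilityMeasure (μ i)]
    (hmom : ∀ i, Integrable (fun z : ℝ => z ^ 2) (μ i))
    (A : Matrix (Fin M) (Fin M) ℝ) (hA : A.IsSymm) (b : Fin M → ℝ) (c : ℝ)
    (f : (Fin M → ℝ) → ℝ)
    (hf : ∀ x : Fin M → ℝ,
      f x = c + ∑ i : Fin M, b i * x i + ∑ i : Fin M, ∑ j : Fin M, A i j * x i * x j)
    (xt : Fin M → ℝ)
    (v : Finset (Fin M) → ℝ)
    (hv : ∀ T : Finset (Fin M),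
      v T = ∫ z : Fin M → ℝ, f (fun j => if j ∈ T then xt j else z j) ∂(Measure.pi μ))
    (SV EIG : Fin M → ℝ)
    (hSV : ∀ i : Fin M,
      SV i = (1 / M : ℝ) * ∑ k ∈ Finset.range M, ((M - 1).choose k : ℝ)⁻¹ *
        ∑ S ∈ (Finset.univ.erase i).powerset.filter (fun S => S.card = k),
          (v (insert i S) - v S))
    (hEIG : ∀ i : Fin M,
      EIG i = ∫ z : Fin M → ℝ,
        (xt i - z i) *
          (∫ α in (0:ℝ)..1, fderiv ℝ f (z + α • (xt - z)) (Pi.single i 1))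
        ∂(Measure.pi μ)) :
    ∀ i : Fin M, SV i = EIG i := by
  intro i
  classical
  have hmint : ∀ j, Integrable (fun t : ℝ => t) (μ j) := fun j =>
    integrable_id_of_sq (μ j) (hmom j)
  -- closed form of v
  have hvF : ∀ T, v T = vFval μ A b c xt T := by
    intro T
    rw [hv T]
    simp only [hf]
    exact v_formula μ hmom A b c xt T
  -- the marginal contribution
  have hdiff : ∀ S : Finset (Fin M), S ⊆ Finset.univ.erase i →
      v (insert i S) - v S
        = (b i * (xt i - ∫ t, t ∂(μ i)) + A i i * (xt i ^ 2 - ∫ t, t ^ 2 ∂(μ i))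
            + 2 * (xt i - ∫ t, t ∂(μ i))
              * ∑ j ∈ Finset.univ.erase i, A i j * (∫ t, t ∂(μ j)))
          + ∑ j ∈ S, (2 * (xt i - ∫ t, t ∂(μ i)) * (A i j * (xt j - ∫ t, t ∂(μ j)))) := by
    intro S hS
    have hiS : i ∉ S := fun h => Finset.notMem_erase i Finset.univ (hS h)
    rw [hvF, hvF, vF_diff μ A hA b c xt i S hiS]
    have hW : ∑ j ∈ Finset.univ.erase i, A i j * Wf μ xt S j
        = (∑ j ∈ Finset.univ.erase i, A i j * (∫ t, t ∂(μ j)))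
          + ∑ j ∈ S, A i j * (xt j - ∫ t, t ∂(μ j)) := by
      have hterm : ∀ j ∈ Finset.univ.erase i, A i j * Wf μ xt S j
          = A i j * (∫ t, t ∂(μ j))
            + (if j ∈ S then A i j * (xt j - ∫ t, t ∂(μ j)) else 0) := by
        intro j _
        by_cases hjS : j ∈ S
        · rw [Wf, if_pos hjS, if_pos hjS]; ring
        · rw [Wf, if_neg hjS, if_neg hjS]; ring
      rw [Finset.sum_congr rfl hterm, Finset.sum_add_distrib, Finset.sum_ite_mem,
        Finset.inter_eq_right.2 hS]
    rw [hW, mul_add, Finset.mul_sum, Finset.mul_sum]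
    ring
  -- Shapley value in closed form
  have hn : (Finset.univ.erase i : Finset (Fin M)).card = M - 1 := by
    rw [Finset.card_erase_of_mem (Finset.mem_univ i), Finset.card_univ, Fintype.card_fin]
  have hM1 : M - 1 + 1 = M := Nat.succ_pred_eq_of_pos i.pos
  have hSVval : SV i
      = (b i * (xt i - ∫ t, t ∂(μ i)) + A i i * (xt i ^ 2 - ∫ t, t ^ 2 ∂(μ i))
          + 2 * (xt i - ∫ t, t ∂(μ i))
            * ∑ j ∈ Finset.univ.erase i, A i j * (∫ t, t ∂(μ j)))
        + (1/2) * ∑ j ∈ Finset.univ.erase i,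
            (2 * (xt i - ∫ t, t ∂(μ i)) * (A i j * (xt j - ∫ t, t ∂(μ j)))) := by
    rw [hSV i]
    have hcups : ∀ k, (∑ S ∈ (Finset.univ.erase i).powerset.filter (fun S => S.card = k),
        (v (insert i S) - v S))
        = ∑ S ∈ (Finset.univ.erase i).powerset.filter (fun S => S.card = k),
          ((b i * (xt i - ∫ t, t ∂(μ i)) + A i i * (xt i ^ 2 - ∫ t, t ^ 2 ∂(μ i))
            + 2 * (xt i - ∫ t, t ∂(μ i))
              * ∑ j ∈ Finset.univ.erase i, A i j * (∫ t, t ∂(μ j)))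
          + ∑ j ∈ S, (2 * (xt i - ∫ t, t ∂(μ i)) * (A i j * (xt j - ∫ t, t ∂(μ j))))) :=
      fun k => Finset.sum_congr rfl fun S hS =>
        hdiff S (Finset.mem_powerset.1 (Finset.mem_filter.1 hS).1)
    simp only [hcups]
    have hrange : Finset.range M
        = Finset.range ((Finset.univ.erase i : Finset (Fin M)).card + 1) := by
      rw [hn, hM1]
    rw [hrange]
    simp only [← hn]
    rw [shapley_sum (Finset.univ.erase i)
      (b i * (xt i - ∫ t, t ∂(μ i)) + A i i * (xt i ^ 2 - ∫ t, t ^ 2 ∂(μ i))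
        + 2 * (xt i - ∫ t, t ∂(μ i)) * ∑ j ∈ Finset.univ.erase i, A i j * (∫ t, t ∂(μ j)))
      (fun j => 2 * (xt i - ∫ t, t ∂(μ i)) * (A i j * (xt j - ∫ t, t ∂(μ j))))]
    rw [hn]
    have hcast : ((M - 1 : ℕ) : ℝ) + 1 = (M : ℝ) := by
      exact_mod_cast congrArg (Nat.cast (R := ℝ)) hM1
    rw [hcast]
    have hMne : (M : ℝ) ≠ 0 := Nat.cast_ne_zero.2 i.pos.ne'
    field_simp
  -- EIG in closed form
  have hinner := inner_integral A hA b c f hf xt i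
  have hEIGval : EIG i
      = (xt i - ∫ t, t ∂(μ i)) * b i
        + (A i i * (xt i ^ 2 - ∫ t, t ^ 2 ∂(μ i))
          + ∑ j ∈ Finset.univ.erase i,
              A i j * ((xt i - ∫ t, t ∂(μ i)) * (xt j + ∫ t, t ∂(μ j)))) := by
    rw [hEIG i]
    simp only [hinner]
    have hexp : ∀ z : Fin M → ℝ, (xt i - z i) * (b i + ∑ j, A i j * (xt j + z j))
        = (xt i - z i) * b i + ∑ j, A i j * ((xt i - z i) * (xt j + z j)) := by
      intro z
      rw [mul_add, Finset.mul_sum]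
      congr 1
      exact Finset.sum_congr rfl fun j _ => by ring
    simp only [hexp]
    have hGsub : ∀ j, Integrable (fun t : ℝ => xt j - t) (μ j) := fun j =>
      (integrable_const _).sub (hmint j)
    have hGadd : ∀ j, Integrable (fun t : ℝ => xt j + t) (μ j) := fun j =>
      (integrable_const _).add (hmint j)
    have hT0 : Integrable (fun z : Fin M → ℝ => (xt i - z i) * b i) (Measure.pi μ) :=
      pi_integrable_one μ i (fun t => (xt i - t) * b i) ((hGsub i).mul_const (b i))
    have hTj : ∀ j, Integrable
        (fun z : Fin M → ℝ => A i j * ((xt i - z i) * (xt j + z j))) (Measure.pi μ) := by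
      intro j
      by_cases hji : j = i
      · subst hji
        have hGint : Integrable (fun t : ℝ => (xt j - t) * (xt j + t)) (μ j) :=
          (((integrable_const (xt j ^ 2)).sub (hmom j))).congr
            (Filter.Eventually.of_forall fun t => by simp only [Pi.sub_apply]; ring)
        exact (pi_integrable_one μ j (fun t => (xt j - t) * (xt j + t)) hGint).const_mul (A j j)
      · have hij' : i ≠ j := fun h => hji h.symm
        exact (pi_integrable_two μ i j hij' (fun t => xt i - t) (fun t => xt j + t)
          (hGsub i) (hGadd j)).const_mul (A i j)
    have e1 : ∫ z : Fin M → ℝ, ((xt i - z i) * b i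
          + ∑ j, A i j * ((xt i - z i) * (xt j + z j))) ∂(Measure.pi μ)
        = (∫ z : Fin M → ℝ, (xt i - z i) * b i ∂(Measure.pi μ))
          + ∫ z : Fin M → ℝ, (∑ j, A i j * ((xt i - z i) * (xt j + z j))) ∂(Measure.pi μ) :=
      integral_add hT0 (integrable_finset_sum _ fun j _ => hTj j)
    rw [e1, integral_finset_sum _ (fun j _ => hTj j)]
    have hv0 : ∫ z : Fin M → ℝ, (xt i - z i) * b i ∂(Measure.pi μ)
        = (xt i - ∫ t, t ∂(μ i)) * b i := by
      rw [pi_integral_one μ i (fun t => (xt i - t) * b i), MeasureTheory.integral_mul_const]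
      congr 1
      rw [integral_sub (integrable_const _) (hmint i)]
      simp
    have hvj : ∀ j, ∫ z : Fin M → ℝ, A i j * ((xt i - z i) * (xt j + z j)) ∂(Measure.pi μ)
        = A i j * (if j = i then xt i ^ 2 - ∫ t, t ^ 2 ∂(μ i)
            else (xt i - ∫ t, t ∂(μ i)) * (xt j + ∫ t, t ∂(μ j))) := by
      intro j
      rw [MeasureTheory.integral_const_mul]
      congr 1
      by_cases hji : j = i
      · subst hji
        rw [if_pos rfl, pi_integral_one μ j (fun t => (xt j - t) * (xt j + t))]
        have h2 : ∫ t, (xt j - t) * (xt j + t) ∂(μ j) = ∫ t, (xt j ^ 2 - t ^ 2) ∂(μ j) :=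
          integral_congr_ae (Filter.Eventually.of_forall fun t => by ring)
        rw [h2, integral_sub (integrable_const _) (hmom j)]
        simp
      · rw [if_neg hji]
        have hij' : i ≠ j := fun h => hji h.symm
        rw [pi_integral_two μ i j hij' (fun t => xt i - t) (fun t => xt j + t)]
        rw [integral_sub (integrable_const _) (hmint i),
          integral_add (integrable_const _) (hmint j)]
        simp
    rw [hv0, Finset.sum_congr rfl (fun j _ => hvj j),
      ← Finset.add_sum_erase _ _ (Finset.mem_univ i), if_pos rfl]
    congr 1
    congr 1
    refine Finset.sum_congr rfl fun j hj => ?_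
    rw [if_neg (Finset.mem_erase.1 hj).1]
  -- put the two sides together
  rw [hSVval, hEIGval]
  have hmerge : (2 * (xt i - ∫ t, t ∂(μ i))
        * ∑ j ∈ Finset.univ.erase i, A i j * (∫ t, t ∂(μ j)))
      + (1/2) * ∑ j ∈ Finset.univ.erase i,
          (2 * (xt i - ∫ t, t ∂(μ i)) * (A i j * (xt j - ∫ t, t ∂(μ j))))
      = ∑ j ∈ Finset.univ.erase i,
          A i j * ((xt i - ∫ t, t ∂(μ i)) * (xt j + ∫ t, t ∂(μ j))) := by
    rw [Finset.mul_sum, Finset.mul_sum, ← Finset.sum_add_distrib]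
    exact Finset.sum_congr rfl fun j _ => by ring
  rw [← hmerge]
  ring
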